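/- (Parabolic gain of regularity for the semigroup.) Let m₁, m₂ ∈ ℝ satisfy m₂ − m₁ − 4 < −n. Then there exists K > 0 such that for every zero-mean ψ₀ with ‖ψ₀‖_{PM^{m₁}} < ∞, one has Sψ₀ ∈ 𝒳^{m₂} with the estimate ‖Sψ₀‖_{𝒳^{m₂}} = Σ_{k∈ℤⁿ_*} ∫_0^T |k|^{m₂} e^{−tσ(k)} |ψ̂₀(k)| dt ≤ K ‖ψ₀‖_{PM^{m₁}}. -/

import Mathlib

open MeasureTheory
open scoped BigOperators ENNReal NNReal

noncomputable section

/-- Euclidean norm `|k|` of a lattice point `k ∈ ℤⁿ`. -/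
def knorm {n : ℕ} (k : Fin n → ℤ) : ℝ := Real.sqrt (∑ i, ((k i : ℝ)) ^ 2)

/-- The Fourier symbol `σ(k)` of `Δ² + Δ` on the torus `∏ᵢ [0, Lᵢ]`. -/
def ksSymbol {n : ℕ} (L : Fin n → ℝ) (k : Fin n → ℤ) : ℝ :=
  (∑ i, (2 * Real.pi / L i) ^ 2 * ((k i : ℝ)) ^ 2) ^ 2
    - ∑ i, (2 * Real.pi / L i) ^ 2 * ((k i : ℝ)) ^ 2

/-- The time interval `[0, T]`, where `T = ⊤` is allowed (giving `[0, ∞)`). -/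
def timeSet (T : ℝ≥0∞) : Set ℝ := {t : ℝ | 0 ≤ t ∧ ENNReal.ofReal t ≤ T}

/-- Case A (`Lᵢ < 2π` for all `i` and `T = ∞`) or Case B (`T ∈ (0, ∞)`). -/
def CaseAB {n : ℕ} (L : Fin n → ℝ) (T : ℝ≥0∞) : Prop :=
  (T = ⊤ ∧ ∀ i, L i < 2 * Real.pi) ∨ (0 < T ∧ T ≠ ⊤)

/-- `‖f‖_{Y^m} = Σ_{k ∈ ℤⁿ_*} |k|^m |f̂(k)|` (zero-mean functions are identified with
their Fourier coefficient sequences on `ℤⁿ_* = ℤⁿ \ {0}`). -/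
def Ynorm {n : ℕ} (m : ℝ) (f : (Fin n → ℤ) → ℂ) : ℝ≥0∞ :=
  ∑' k : {k : Fin n → ℤ // k ≠ 0}, ENNReal.ofReal (knorm k.1 ^ m * ‖f k.1‖)

/-- `‖f‖_{𝒴^m} = Σ_{k ∈ ℤⁿ_*} sup_{t ∈ [0,T]} |k|^m |f̂(t,k)|`. -/
def calYnorm {n : ℕ} (T : ℝ≥0∞) (m : ℝ) (f : ℝ → (Fin n → ℤ) → ℂ) : ℝ≥0∞ :=
  ∑' k : {k : Fin n → ℤ // k ≠ 0},
    ⨆ t ∈ timeSet T, ENNReal.ofReal (knorm k.1 ^ m * ‖f t k.1‖)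

/-- `‖f‖_{𝒳^m} = Σ_{k ∈ ℤⁿ_*} ∫_0^T |k|^m |f̂(t,k)| dt`. -/
def calXnorm {n : ℕ} (T : ℝ≥0∞) (m : ℝ) (f : ℝ → (Fin n → ℤ) → ℂ) : ℝ≥0∞ :=
  ∑' k : {k : Fin n → ℤ // k ≠ 0},
    ∫⁻ t in timeSet T, ENNReal.ofReal (knorm k.1 ^ m * ‖f t k.1‖)

/-- `‖f‖_{PM^m} = sup_{k ∈ ℤⁿ_*} |k|^m |f̂(k)|`. -/
def PMnorm {n : ℕ} (m : ℝ) (f : (Fin n → ℤ) → ℂ) : ℝ≥0∞ :=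
  ⨆ k : {k : Fin n → ℤ // k ≠ 0}, ENNReal.ofReal (knorm k.1 ^ m * ‖f k.1‖)

/-- `‖f‖_{𝒫ℳ^m} = sup_{t ∈ [0,T]} sup_{k ∈ ℤⁿ_*} |k|^m |f̂(t,k)|`. -/
def calPMnorm {n : ℕ} (T : ℝ≥0∞) (m : ℝ) (f : ℝ → (Fin n → ℤ) → ℂ) : ℝ≥0∞ :=
  ⨆ t ∈ timeSet T, ⨆ k : {k : Fin n → ℤ // k ≠ 0},
    ENNReal.ofReal (knorm k.1 ^ m * ‖f t k.1‖)

/-- The semigroup `S`, acting on Fourier coefficients: `(Sψ₀)^(t,k) = e^{-tσ(k)} ψ̂₀(k)`. -/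
def ksSemigroup {n : ℕ} (L : Fin n → ℝ) (ψ₀ : (Fin n → ℤ) → ℂ) :
    ℝ → (Fin n → ℤ) → ℂ :=
  fun t k => (Real.exp (-(t * ksSymbol L k)) : ℂ) * ψ₀ k

/-- The (normalized) bilinear operator `B`, given on Fourier coefficients by
`B̂(F,G)(t,k) = -∫_0^t e^{-(t-s)σ(k)} Σ_{j ∈ ℤⁿ_*, j ≠ k} ((k-j)·j) F̂(s,k-j) Ĝ(s,j) ds`. -/
def ksBilinear {n : ℕ} (L : Fin n → ℝ) (F G : ℝ → (Fin n → ℤ) → ℂ) :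
    ℝ → (Fin n → ℤ) → ℂ :=
  fun t k =>
    -∫ s in Set.Ioc (0 : ℝ) t,
      (Real.exp (-((t - s) * ksSymbol L k)) : ℂ) *
        ∑' j : {j : Fin n → ℤ // j ≠ 0 ∧ j ≠ k},
          ((∑ i, ((k i : ℝ) - (j.1 i : ℝ)) * (j.1 i : ℝ) : ℝ) : ℂ) *
            F s (k - j.1) * G s j.1

/-- `ψ` is a mild solution of the Kuramoto–Sivashinsky equation on `[0,T]` with data `ψ₀`:
`ψ̂(t,k) = e^{-tσ(k)} ψ̂₀(k) - (1/2) B̂(ψ,ψ)(t,k)` for all `t ∈ [0,T]`, `k ∈ ℤⁿ_*`. -/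
def IsMildSolution {n : ℕ} (L : Fin n → ℝ) (T : ℝ≥0∞)
    (ψ₀ : (Fin n → ℤ) → ℂ) (ψ : ℝ → (Fin n → ℤ) → ℂ) : Prop :=
  ∀ t ∈ timeSet T, ∀ k : Fin n → ℤ, k ≠ 0 →
    ψ t k = (Real.exp (-(t * ksSymbol L k)) : ℂ) * ψ₀ k
      - (1 / 2 : ℂ) * ksBilinear L ψ ψ t k


/-! ### Auxiliary lemmas -/

lemma knorm_nonneg' {n : ℕ} (k : Fin n → ℤ) : 0 ≤ knorm k := Real.sqrt_nonneg _

lemma one_le_knorm {n : ℕ} {k : Fin n → ℤ} (hk : k ≠ 0) : 1 ≤ knorm k := by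
  have h : ∃ i, k i ≠ 0 := by
    by_contra h
    push_neg at h
    exact hk (funext h)
  obtain ⟨i, hi⟩ := h
  have h1 : (1 : ℝ) ≤ ((k i : ℝ)) ^ 2 := by
    have : (1 : ℤ) ≤ (k i) ^ 2 := by
      rcases lt_or_gt_of_ne hi with h | h <;> nlinarith
    exact_mod_cast this
  have h2 : (1 : ℝ) ≤ ∑ j, ((k j : ℝ)) ^ 2 := by
    refine h1.trans ?_
    exact Finset.single_le_sum (f := fun j => ((k j : ℝ))^2) (fun j _ => sq_nonneg _)
      (Finset.mem_univ i)
  calc (1:ℝ) = Real.sqrt 1 := (Real.sqrt_one).symm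
  _ ≤ knorm k := Real.sqrt_le_sqrt h2

lemma knorm_pos {n : ℕ} {k : Fin n → ℤ} (hk : k ≠ 0) : 0 < knorm k :=
  lt_of_lt_of_le one_pos (one_le_knorm hk)

lemma abs_le_knorm {n : ℕ} (k : Fin n → ℤ) (i : Fin n) : |(k i : ℝ)| ≤ knorm k := by
  have h : ((k i : ℝ)) ^ 2 ≤ ∑ j, ((k j : ℝ)) ^ 2 :=
    Finset.single_le_sum (f := fun j => ((k j : ℝ))^2) (fun j _ => sq_nonneg _)
      (Finset.mem_univ i)
  calc |(k i : ℝ)| = Real.sqrt (((k i : ℝ)) ^ 2) := (Real.sqrt_sq_eq_abs _).symm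
  _ ≤ knorm k := Real.sqrt_le_sqrt h

lemma sq_knorm {n : ℕ} (k : Fin n → ℤ) : knorm k ^ 2 = ∑ i, ((k i : ℝ)) ^ 2 :=
  Real.sq_sqrt (Finset.sum_nonneg fun i _ => sq_nonneg _)

lemma summable_gq {q : ℝ} (hq : q < -1) :
    Summable (fun j : ℤ => (max 1 |(j : ℝ)|) ^ q) := by
  have hnat : Summable (fun m : ℕ => (max 1 |(m : ℝ)|) ^ q) := by
    rw [← summable_nat_add_iff 1]
    have h := Real.summable_nat_rpow.mpr hq
    rw [← summable_nat_add_iff 1] at h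
    refine h.congr fun m => ?_
    have habs : |((m+1 : ℕ) : ℝ)| = ((m+1 : ℕ) : ℝ) := abs_of_nonneg (by positivity)
    rw [habs, max_eq_right (by exact_mod_cast Nat.one_le_iff_ne_zero.mpr (Nat.succ_ne_zero m))]
  refine Summable.of_nat_of_neg (hnat.congr fun m => ?_) (hnat.congr fun m => ?_)
  · norm_num
  · push_cast
    rw [abs_neg]

lemma summable_pi_prod {g : ℤ → ℝ} (hg0 : ∀ j, 0 ≤ g j) (hg : Summable g) :
    ∀ n : ℕ, Summable (fun k : Fin n → ℤ => ∏ i, g (k i)) := by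
  intro n
  induction n with
  | zero =>
      simp only [Finset.univ_eq_empty, Finset.prod_empty]
      exact Summable.of_finite
  | succ n ih =>
      have h1 : (0 : ℤ → ℝ) ≤ g := hg0
      have h2 : (0 : (Fin n → ℤ) → ℝ) ≤ fun k => ∏ i, g (k i) :=
        fun k => Finset.prod_nonneg fun i _ => hg0 _
      have hmul : Summable (fun p : ℤ × (Fin n → ℤ) => g p.1 * ∏ i, g (p.2 i)) :=
        Summable.mul_of_nonneg (f := g) (g := fun k : Fin n → ℤ => ∏ i, g (k i)) hg ih h1 h2
      have h3 := hmul.comp_injective (Fin.consEquiv (fun _ : Fin (n+1) => ℤ)).symm.injective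
      refine h3.congr fun k => ?_
      simp only [Function.comp_apply, Fin.prod_univ_succ]
      rfl

lemma knorm_rpow_le_prod {n : ℕ} (hn : 1 ≤ n) {k : Fin n → ℤ} (hk : k ≠ 0)
    {p : ℝ} (hp : p ≤ 0) :
    knorm k ^ p ≤ ∏ i, (max 1 |(k i : ℝ)|) ^ (p / n) := by
  have hkn : 1 ≤ knorm k := one_le_knorm hk
  have hkpos : 0 < knorm k := lt_of_lt_of_le one_pos hkn
  have hP1 : (1:ℝ) ≤ ∏ i, max 1 |(k i : ℝ)| :=
    by
      have h := Finset.prod_le_prod (s := Finset.univ) (f := fun _ : Fin n => (1:ℝ))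
        (g := fun i => max 1 |(k i : ℝ)|) (fun i _ => zero_le_one) (fun i _ => le_max_left _ _)
      simpa using h
  have hPle : (∏ i, max 1 |(k i : ℝ)|) ≤ knorm k ^ (n : ℕ) := by
    have h1 : (∏ i, max 1 |(k i : ℝ)|) ≤ ∏ x : Fin n, knorm k :=
      Finset.prod_le_prod (fun i _ => le_trans zero_le_one (le_max_left _ _))
        (fun i _ => max_le hkn (abs_le_knorm k i))
    have h2 : (∏ x : Fin n, knorm k) = knorm k ^ (n : ℕ) := by
      rw [Finset.prod_const, Finset.card_univ, Fintype.card_fin]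
    rw [h2] at h1; exact h1
  have hq : p / n ≤ 0 := div_nonpos_of_nonpos_of_nonneg hp (Nat.cast_nonneg n)
  have step : (knorm k ^ (n:ℕ)) ^ (p / n) ≤ (∏ i, max 1 |(k i : ℝ)|) ^ (p / n) :=
    Real.rpow_le_rpow_of_nonpos (lt_of_lt_of_le one_pos hP1) hPle hq
  have hn0 : (n : ℝ) ≠ 0 := by positivity
  have e1 : (knorm k ^ (n:ℕ)) ^ (p / n) = knorm k ^ p := by
    rw [← Real.rpow_natCast (knorm k) n, ← Real.rpow_mul hkpos.le]
    congr 1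
    field_simp
  have e2 : (∏ i, max 1 |(k i : ℝ)|) ^ (p / n) = ∏ i, (max 1 |(k i : ℝ)|) ^ (p / n) := by
    rw [← Real.finset_prod_rpow _ _ (fun i _ => le_trans zero_le_one (le_max_left _ _)) _]
  rw [e1, e2] at step
  exact step

lemma tsum_ofReal_knorm_rpow_ne_top {n : ℕ} (hn : 1 ≤ n) {p : ℝ} (hp : p < -(n:ℝ)) :
    ∑' k : {k : Fin n → ℤ // k ≠ 0}, ENNReal.ofReal (knorm k.1 ^ p) ≠ ⊤ := by
  have hnpos : (0:ℝ) < n := by exact_mod_cast hn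
  have hq : p / n < -1 := by
    rw [div_lt_iff₀ hnpos]
    nlinarith
  have hp0 : p ≤ 0 := by nlinarith
  set g : ℤ → ℝ := fun j => (max 1 |(j : ℝ)|) ^ (p/n) with hg
  have hg0 : ∀ j, 0 ≤ g j := fun j => Real.rpow_nonneg (le_trans zero_le_one (le_max_left _ _)) _
  have hS : Summable (fun k : Fin n → ℤ => ∏ i, g (k i)) :=
    summable_pi_prod hg0 (summable_gq hq) n
  have hbound : ∑' k : {k : Fin n → ℤ // k ≠ 0}, ENNReal.ofReal (knorm k.1 ^ p)
      ≤ ENNReal.ofReal (∑' k : Fin n → ℤ, ∏ i, g (k i)) := by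
    calc ∑' k : {k : Fin n → ℤ // k ≠ 0}, ENNReal.ofReal (knorm k.1 ^ p)
        ≤ ∑' k : {k : Fin n → ℤ // k ≠ 0}, ENNReal.ofReal (∏ i, g (k.1 i)) :=
          ENNReal.tsum_le_tsum fun k =>
            ENNReal.ofReal_le_ofReal (knorm_rpow_le_prod hn k.2 hp0)
      _ ≤ ∑' k : Fin n → ℤ, ENNReal.ofReal (∏ i, g (k i)) :=
          ENNReal.tsum_comp_le_tsum_of_injective Subtype.val_injective _
      _ = ENNReal.ofReal (∑' k : Fin n → ℤ, ∏ i, g (k i)) :=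
          (ENNReal.ofReal_tsum_of_nonneg (fun k => Finset.prod_nonneg fun i _ => hg0 _) hS).symm
  exact ne_top_of_le_ne_top ENNReal.ofReal_ne_top hbound

lemma lintegral_exp_Ici {a : ℝ} (ha : 0 < a) :
    ∫⁻ t in Set.Ici (0:ℝ), ENNReal.ofReal (Real.exp (-(t * a))) = ENNReal.ofReal (1/a) := by
  rw [← setLIntegral_congr (MeasureTheory.Ioi_ae_eq_Ici (a := (0:ℝ)) (μ := volume))]
  have hint : IntegrableOn (fun t : ℝ => Real.exp (-(t * a))) (Set.Ioi 0) := by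
    have h := exp_neg_integrableOn_Ioi 0 ha
    refine h.congr_fun (fun t _ => by ring_nf) measurableSet_Ioi
  rw [← ofReal_integral_eq_lintegral_ofReal hint
    (Filter.Eventually.of_forall fun t => (Real.exp_pos _).le)]
  congr 1
  have h := integral_comp_mul_left_Ioi (fun x => Real.exp (-x)) 0 ha
  simp only [mul_zero, integral_exp_neg_Ioi_zero, smul_eq_mul, mul_one] at h
  rw [show (fun t : ℝ => Real.exp (-(t * a))) = fun x : ℝ => Real.exp (-(a * x)) by
    funext x; ring_nf]
  rw [h, one_div]

lemma exp_knorm_measurable (b : ℝ) :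
    Measurable (fun t : ℝ => ENNReal.ofReal (Real.exp (-(t * b)))) :=
  (ENNReal.measurable_ofReal).comp
    ((Real.continuous_exp.comp (by continuity)).measurable)

/-- Uniform bound on `∫ e^{-tσ(k)} dt` in both cases. -/
lemma integral_semigroup_bound {n : ℕ} (hn : 1 ≤ n) (L : Fin n → ℝ) (hL : ∀ i, 0 < L i)
    (T : ℝ≥0∞) (hT : CaseAB L T) :
    ∃ C : ℝ, 0 < C ∧ ∀ k : Fin n → ℤ, k ≠ 0 →
      ∫⁻ t in timeSet T, ENNReal.ofReal (Real.exp (-(t * ksSymbol L k)))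
        ≤ ENNReal.ofReal (C * knorm k ^ (-4 : ℝ)) := by
  haveI : Nonempty (Fin n) := Fin.pos_iff_nonempty.mp hn
  have hne : (Finset.univ : Finset (Fin n)).Nonempty := Finset.univ_nonempty
  set c : ℝ := Finset.univ.inf' hne (fun i => (2 * Real.pi / L i)^2) with hc
  have hc_le : ∀ i, c ≤ (2 * Real.pi / L i)^2 := fun i =>
    Finset.inf'_le _ (Finset.mem_univ i)
  have hc_pos : 0 < c := by
    rw [hc, Finset.lt_inf'_iff]
    intro i _
    have h0 : 0 < 2 * Real.pi / L i := div_pos (by positivity) (hL i)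
    exact pow_pos h0 2
  -- notation for X k
  set X : (Fin n → ℤ) → ℝ := fun k => ∑ i, (2 * Real.pi / L i) ^ 2 * ((k i : ℝ)) ^ 2 with hX
  have hsymb : ∀ k, ksSymbol L k = (X k)^2 - X k := fun k => rfl
  have hXk : ∀ k : Fin n → ℤ, c * knorm k ^ 2 ≤ X k := by
    intro k
    rw [sq_knorm, Finset.mul_sum]
    exact Finset.sum_le_sum fun i _ =>
      mul_le_mul_of_nonneg_right (hc_le i) (sq_nonneg _)
  have hX0 : ∀ k : Fin n → ℤ, 0 ≤ X k := fun k =>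
    Finset.sum_nonneg fun i _ => mul_nonneg (sq_nonneg _) (sq_nonneg _)
  have hm4 : ∀ k : Fin n → ℤ, k ≠ 0 → knorm k ^ (-4:ℝ) = (knorm k ^ (4:ℕ))⁻¹ := by
    intro k hk
    rw [show ((-4:ℝ)) = -((4:ℕ):ℝ) by norm_num, Real.rpow_neg (knorm_nonneg' _),
      Real.rpow_natCast]
  rcases hT with ⟨hTtop, hLlt⟩ | ⟨hT0, hTne⟩
  · -- Case A
    have hts : timeSet T = Set.Ici (0:ℝ) := by
      ext t
      simp [timeSet, hTtop]
    have hc1 : 1 < c := by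
      rw [hc, Finset.lt_inf'_iff]
      intro i _
      have h1 : 1 < 2 * Real.pi / L i := (one_lt_div (hL i)).mpr (hLlt i)
      nlinarith
    set α : ℝ := c^2 - c with hα
    have hα_pos : 0 < α := by nlinarith
    refine ⟨1/α, one_div_pos.mpr hα_pos, fun k hk => ?_⟩
    have hm1 : 1 ≤ knorm k := one_le_knorm hk
    have hb_pos : 0 < α * knorm k ^ (4:ℕ) := by positivity
    have hσ : α * knorm k ^ (4:ℕ) ≤ ksSymbol L k := by
      rw [hsymb]
      have h1 : c * knorm k ^ 2 ≤ X k := hXk k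
      have h2 : (X k - c * knorm k ^ 2) * (X k + c * knorm k ^ 2 - 1) ≥ 0 := by
        apply mul_nonneg (by linarith)
        nlinarith
      have h3 : 0 ≤ c * knorm k ^ 2 * (knorm k ^ 2 - 1) :=
        mul_nonneg (mul_nonneg hc_pos.le (sq_nonneg _)) (by nlinarith)
      nlinarith [h2, h3]
    rw [hts]
    calc ∫⁻ t in Set.Ici (0:ℝ), ENNReal.ofReal (Real.exp (-(t * ksSymbol L k)))
        ≤ ∫⁻ t in Set.Ici (0:ℝ),
            ENNReal.ofReal (Real.exp (-(t * (α * knorm k ^ (4:ℕ))))) := by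
          refine setLIntegral_mono (exp_knorm_measurable _) fun t ht => ?_
          refine ENNReal.ofReal_le_ofReal (Real.exp_le_exp.mpr ?_)
          have ht0 : 0 ≤ t := ht
          nlinarith [mul_le_mul_of_nonneg_left hσ ht0]
      _ = ENNReal.ofReal (1/(α * knorm k ^ (4:ℕ))) := lintegral_exp_Ici hb_pos
      _ ≤ ENNReal.ofReal (1/α * knorm k ^ (-4:ℝ)) := by
          refine ENNReal.ofReal_le_ofReal ?_
          rw [hm4 k hk, one_div, mul_inv]
          rw [one_div]
  · -- Case B
    have hT' : 0 < T.toReal := ENNReal.toReal_pos hT0.ne' hTne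
    set T' : ℝ := T.toReal with hT'def
    have hts : timeSet T = Set.Icc (0:ℝ) T' := by
      ext t
      simp [timeSet, Set.mem_Icc, ENNReal.ofReal_le_iff_le_toReal hTne, hT'def]
    set C : ℝ := max (2/c^2) (4*T'*Real.exp (T'/4)/c^2) with hC
    have hC_pos : 0 < C := lt_max_of_lt_left (by positivity)
    refine ⟨C, hC_pos, fun k hk => ?_⟩
    have hm1 : 1 ≤ knorm k := one_le_knorm hk
    have hmpos : 0 < knorm k := lt_of_lt_of_le one_pos hm1
    rw [hts]
    by_cases h2 : 2 ≤ c * knorm k ^ 2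
    · -- large frequencies
      set b : ℝ := c^2/2 * knorm k ^ (4:ℕ) with hb
      have hb_pos : 0 < b := by positivity
      have hσ : b ≤ ksSymbol L k := by
        rw [hsymb]
        have h1 : c * knorm k ^ 2 ≤ X k := hXk k
        have hx2 : 2 ≤ X k := le_trans h2 h1
        have hsq : (c * knorm k ^ 2)^2 ≤ (X k)^2 := by nlinarith
        rw [hb]
        nlinarith
      calc ∫⁻ t in Set.Icc (0:ℝ) T', ENNReal.ofReal (Real.exp (-(t * ksSymbol L k)))
          ≤ ∫⁻ t in Set.Ici (0:ℝ), ENNReal.ofReal (Real.exp (-(t * ksSymbol L k))) :=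
            lintegral_mono' (Measure.restrict_mono Set.Icc_subset_Ici_self le_rfl) le_rfl
        _ ≤ ∫⁻ t in Set.Ici (0:ℝ), ENNReal.ofReal (Real.exp (-(t * b))) := by
            refine setLIntegral_mono (exp_knorm_measurable _) fun t ht => ?_
            refine ENNReal.ofReal_le_ofReal (Real.exp_le_exp.mpr ?_)
            have ht0 : 0 ≤ t := ht
            nlinarith [mul_le_mul_of_nonneg_left hσ ht0]
        _ = ENNReal.ofReal (1/b) := lintegral_exp_Ici hb_pos
        _ ≤ ENNReal.ofReal (C * knorm k ^ (-4:ℝ)) := by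
            refine ENNReal.ofReal_le_ofReal ?_
            rw [hm4 k hk, hb]
            rw [one_div, mul_inv, ← one_div (c^2/2)]
            have : (1:ℝ)/(c^2/2) = 2/c^2 := by field_simp
            rw [this]
            exact mul_le_mul_of_nonneg_right (le_max_left _ _) (by positivity)
    · -- small frequencies
      push_neg at h2
      have hσ : -(1/4:ℝ) ≤ ksSymbol L k := by
        rw [hsymb]
        nlinarith [sq_nonneg (X k - 1/2)]
      have hm4small : knorm k ^ (4:ℕ) ≤ 4/c^2 := by
        have h3 : knorm k ^ 2 ≤ 2/c := by
          rw [le_div_iff₀ hc_pos]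
          nlinarith
        have h4 : (knorm k ^ 2)^2 ≤ (2/c)^2 := by nlinarith [sq_nonneg (knorm k)]
        calc knorm k ^ (4:ℕ) = (knorm k ^ 2)^2 := by ring
        _ ≤ (2/c)^2 := h4
        _ = 4/c^2 := by field_simp; ring
      calc ∫⁻ t in Set.Icc (0:ℝ) T', ENNReal.ofReal (Real.exp (-(t * ksSymbol L k)))
          ≤ ∫⁻ _t in Set.Icc (0:ℝ) T', ENNReal.ofReal (Real.exp (T'/4)) := by
            refine setLIntegral_mono measurable_const fun t ht => ?_
            refine ENNReal.ofReal_le_ofReal (Real.exp_le_exp.mpr ?_)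
            obtain ⟨ht0, htT⟩ := ht
            nlinarith [mul_le_mul_of_nonneg_left hσ ht0]
        _ = ENNReal.ofReal (Real.exp (T'/4)) * volume (Set.Icc (0:ℝ) T') :=
            setLIntegral_const _ _
        _ = ENNReal.ofReal (Real.exp (T'/4) * T') := by
            rw [Real.volume_Icc, sub_zero, ← ENNReal.ofReal_mul (Real.exp_pos _).le]
        _ ≤ ENNReal.ofReal (C * knorm k ^ (-4:ℝ)) := by
            refine ENNReal.ofReal_le_ofReal ?_
            rw [hm4 k hk]
            have hinv : c^2/4 ≤ (knorm k ^ (4:ℕ))⁻¹ := by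
              rw [le_inv_comm₀ (by positivity) (by positivity)]
              calc knorm k ^ (4:ℕ) ≤ 4/c^2 := hm4small
              _ = (c^2/4)⁻¹ := by field_simp
            have heq : Real.exp (T'/4) * T' = (4*T'*Real.exp (T'/4)/c^2) * (c^2/4) := by
              field_simp
            rw [heq]
            exact mul_le_mul (le_max_right _ _) hinv (by positivity) hC_pos.le

/-- parabolic gain of regularity for the semigroup: if
`m₂ - m₁ - 4 < -n` then `S : PM^{m₁} → 𝒳^{m₂}` with
`‖Sψ₀‖_{𝒳^{m₂}} ≤ K ‖ψ₀‖_{PM^{m₁}}`. -/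
theorem semigroup_PM_to_X_estimate {n : ℕ} (hn : 1 ≤ n)
    (L : Fin n → ℝ) (hL : ∀ i, 0 < L i) (T : ℝ≥0∞) (hT : CaseAB L T)
    (m₁ m₂ : ℝ) (hm : m₂ - m₁ - 4 < -(n : ℝ)) :
    ∃ K : ℝ, 0 < K ∧ ∀ ψ₀ : (Fin n → ℤ) → ℂ, PMnorm m₁ ψ₀ ≠ ⊤ →
      calXnorm T m₂ (ksSemigroup L ψ₀) ≤ ENNReal.ofReal K * PMnorm m₁ ψ₀ := by
  obtain ⟨C, hC_pos, hC⟩ := integral_semigroup_bound hn L hL T hT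
  -- the lattice sum
  set p : ℝ := m₂ - m₁ - 4 with hp
  have hSne : ∑' k : {k : Fin n → ℤ // k ≠ 0}, ENNReal.ofReal (knorm k.1 ^ p) ≠ ⊤ :=
    tsum_ofReal_knorm_rpow_ne_top hn hm
  set SS : ℝ≥0∞ := ∑' k : {k : Fin n → ℤ // k ≠ 0}, ENNReal.ofReal (knorm k.1 ^ p) with hSS
  set K : ℝ := C * SS.toReal + 1 with hK
  have hK_pos : 0 < K := by
    have : 0 ≤ C * SS.toReal := mul_nonneg hC_pos.le ENNReal.toReal_nonneg
    linarith
  refine ⟨K, hK_pos, fun ψ₀ hψ₀ => ?_⟩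
  have key : ∀ k : {k : Fin n → ℤ // k ≠ 0},
      (∫⁻ t in timeSet T,
        ENNReal.ofReal (knorm k.1 ^ m₂ * ‖ksSemigroup L ψ₀ t k.1‖))
      ≤ ENNReal.ofReal C * ENNReal.ofReal (knorm k.1 ^ p) * PMnorm m₁ ψ₀ := by
    intro k
    obtain ⟨k, hk⟩ := k
    have hmpos : 0 < knorm k := knorm_pos hk
    have habs : ∀ t : ℝ, ‖ksSemigroup L ψ₀ t k‖
        = Real.exp (-(t * ksSymbol L k)) * ‖ψ₀ k‖ := by
      intro t
      unfold ksSemigroup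
      rw [norm_mul, Complex.norm_real, Real.norm_eq_abs, abs_of_pos (Real.exp_pos _)]
    have hsplit : ∀ t : ℝ, ENNReal.ofReal (knorm k ^ m₂ * ‖ksSemigroup L ψ₀ t k‖)
        = ENNReal.ofReal (knorm k ^ (m₂ - m₁) * Real.exp (-(t * ksSymbol L k)))
          * ENNReal.ofReal (knorm k ^ m₁ * ‖ψ₀ k‖) := by
      intro t
      rw [habs t, ← ENNReal.ofReal_mul (by positivity)]
      congr 1
      have h1 : knorm k ^ m₂ = knorm k ^ (m₂ - m₁) * knorm k ^ m₁ := by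
        rw [← Real.rpow_add hmpos]
        ring_nf
      rw [h1]
      ring
    have hPMle : ENNReal.ofReal (knorm k ^ m₁ * ‖ψ₀ k‖) ≤ PMnorm m₁ ψ₀ :=
      le_iSup (fun j : {j : Fin n → ℤ // j ≠ 0} =>
        ENNReal.ofReal (knorm j.1 ^ m₁ * ‖ψ₀ j.1‖)) ⟨k, hk⟩
    calc (∫⁻ t in timeSet T,
          ENNReal.ofReal (knorm k ^ m₂ * ‖ksSemigroup L ψ₀ t k‖))
        = ∫⁻ t in timeSet T,
            ENNReal.ofReal (knorm k ^ (m₂ - m₁) * Real.exp (-(t * ksSymbol L k)))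
              * ENNReal.ofReal (knorm k ^ m₁ * ‖ψ₀ k‖) := by
          exact lintegral_congr fun t => hsplit t
      _ ≤ ∫⁻ t in timeSet T,
            ENNReal.ofReal (knorm k ^ (m₂ - m₁) * Real.exp (-(t * ksSymbol L k)))
              * PMnorm m₁ ψ₀ :=
          lintegral_mono fun t => mul_le_mul_right hPMle _
      _ = (∫⁻ t in timeSet T,
            ENNReal.ofReal (knorm k ^ (m₂ - m₁) * Real.exp (-(t * ksSymbol L k))))
              * PMnorm m₁ ψ₀ :=
          lintegral_mul_const' _ _ hψ₀
      _ ≤ ENNReal.ofReal C * ENNReal.ofReal (knorm k ^ p) * PMnorm m₁ ψ₀ := by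
          refine mul_le_mul_left ?_ _
          have hin : (∫⁻ t in timeSet T,
              ENNReal.ofReal (knorm k ^ (m₂ - m₁) * Real.exp (-(t * ksSymbol L k))))
              = ENNReal.ofReal (knorm k ^ (m₂ - m₁))
                * ∫⁻ t in timeSet T, ENNReal.ofReal (Real.exp (-(t * ksSymbol L k))) := by
            rw [← lintegral_const_mul' _ _ ENNReal.ofReal_ne_top]
            exact lintegral_congr fun t => by
              rw [← ENNReal.ofReal_mul (by positivity)]
          rw [hin]
          calc ENNReal.ofReal (knorm k ^ (m₂ - m₁))
              * ∫⁻ t in timeSet T, ENNReal.ofReal (Real.exp (-(t * ksSymbol L k)))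
              ≤ ENNReal.ofReal (knorm k ^ (m₂ - m₁))
                * ENNReal.ofReal (C * knorm k ^ (-4:ℝ)) :=
                mul_le_mul_right (hC k hk) _
            _ = ENNReal.ofReal C * ENNReal.ofReal (knorm k ^ p) := by
                rw [← ENNReal.ofReal_mul (by positivity),
                  ← ENNReal.ofReal_mul (by positivity)]
                congr 1
                have h4 : knorm k ^ (m₂ - m₁) * knorm k ^ (-4:ℝ) = knorm k ^ p := by
                  rw [← Real.rpow_add hmpos]
                  congr 1
                calc knorm k ^ (m₂ - m₁) * (C * knorm k ^ (-4:ℝ))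
                    = C * (knorm k ^ (m₂ - m₁) * knorm k ^ (-4:ℝ)) := by ring
                _ = C * knorm k ^ p := by rw [h4]
  calc calXnorm T m₂ (ksSemigroup L ψ₀)
      ≤ ∑' k : {k : Fin n → ℤ // k ≠ 0},
          ENNReal.ofReal C * ENNReal.ofReal (knorm k.1 ^ p) * PMnorm m₁ ψ₀ :=
        ENNReal.tsum_le_tsum key
    _ = ENNReal.ofReal C * SS * PMnorm m₁ ψ₀ := by
        rw [ENNReal.tsum_mul_right, ← ENNReal.tsum_mul_left]
    _ ≤ ENNReal.ofReal K * PMnorm m₁ ψ₀ := by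
        refine mul_le_mul_left ?_ _
        have hSS : SS = ENNReal.ofReal SS.toReal := (ENNReal.ofReal_toReal hSne).symm
        rw [hSS, ← ENNReal.ofReal_mul hC_pos.le]
        exact ENNReal.ofReal_le_ofReal (by rw [hK]; linarith)
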